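/- arXiv:1008.3241 — 4 statements merged into one kernel-verified Lean document; each statement's English description precedes it below -/
import Mathlib

section
/- If a semigroup S is a left I-order in a bisimple inverse ω-semigroup Q whose idempotents are e_0 > e_1 > e_2 > ⋯, then for every n ∈ ℕ there exists an element s ∈ S with s 𝓛 e_n in Q (i.e., S intersects every 𝓛-class of Q). -/
/-- Green's relation `𝓡`. -/
def GreenR {Q : Type*} [Mul Q] (a b : Q) : Prop :=
  a = b ∨ ∃ x y : Q, a * x = b ∧ b * y = a

/-- Green's relation `𝓛`. -/
def GreenL {Q : Type*} [Mul Q] (a b : Q) : Prop :=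
  a = b ∨ ∃ x y : Q, x * a = b ∧ y * b = a

/-- Green's relation `𝓓`. -/
def GreenD {Q : Type*} [Mul Q] (a b : Q) : Prop :=
  ∃ c : Q, GreenR a c ∧ GreenL c b

/-- `Q` is an inverse semigroup with inverse map `inv`: every `q` has `inv q` as its
unique (semigroup-theoretic) inverse. -/
def IsInverseSg (Q : Type*) [Mul Q] (inv : Q → Q) : Prop :=
  ∀ q : Q, (q * inv q * q = q ∧ inv q * q * inv q = inv q) ∧
    ∀ x : Q, q * x * q = q → x * q * x = x → x = inv q

/-- `Q` is bisimple: any two elements are `𝓓`-related. -/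
def IsBisimple (Q : Type*) [Mul Q] : Prop := ∀ a b : Q, GreenD a b

/-- The idempotents of `Q` are exactly `e 0 > e 1 > e 2 > ⋯`, an ω-chain
(ordering `e ≤ f ↔ e * f = f * e = e`). -/
def IsOmegaChain (Q : Type*) [Mul Q] (e : ℕ → Q) : Prop :=
  (∀ n, e n * e n = e n) ∧
  (∀ q : Q, q * q = q → ∃ n, q = e n) ∧
  (∀ n, e (n + 1) * e n = e (n + 1) ∧ e n * e (n + 1) = e (n + 1)) ∧
  Function.Injective e

/-- `T` is a left I-order in `Q` (with inverse map `inv`): every element of `Q` is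
of the form `inv a * b` with `a, b ∈ T`. -/
def IsLeftIOrder {Q : Type*} [Mul Q] (inv : Q → Q) (T : Set Q) : Prop :=
  ∀ q : Q, ∃ a ∈ T, ∃ b ∈ T, q = inv a * b

section Aux
variable {Q : Type*} [Semigroup Q] {inv : Q → Q} {e : ℕ → Q}

lemma aux_inv_unique (hinv : IsInverseSg Q inv) {q x : Q}
    (h1 : q * x * q = q) (h2 : x * q * x = x) : x = inv q :=
  (hinv q).2 x h1 h2

lemma aux_inv_invol (hinv : IsInverseSg Q inv) (q : Q) : inv (inv q) = q :=
  (aux_inv_unique hinv (hinv q).1.2 (hinv q).1.1).symm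

lemma aux_inv_of_idem (hinv : IsInverseSg Q inv) {p : Q} (hp : p * p = p) : inv p = p := by
  symm; apply aux_inv_unique hinv <;> rw [hp, hp]

lemma aux_idem_left (hinv : IsInverseSg Q inv) (q : Q) :
    (q * inv q) * (q * inv q) = q * inv q := by
  rw [mul_assoc, ← mul_assoc (inv q) q (inv q), (hinv q).1.2]

lemma aux_idem_right (hinv : IsInverseSg Q inv) (q : Q) :
    (inv q * q) * (inv q * q) = inv q * q := by
  rw [mul_assoc, ← mul_assoc q (inv q) q, (hinv q).1.1]

lemma aux_chain_step (hchain : IsOmegaChain Q e) :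
    ∀ k n, e (n + k) * e n = e (n + k) ∧ e n * e (n + k) = e (n + k) := by
  intro k
  induction k with
  | zero => intro n; exact ⟨by simpa using hchain.1 n, by simpa using hchain.1 n⟩
  | succ k ih =>
    intro n
    have h1 := (hchain.2.2.1 (n + k)).1
    have h2 := (hchain.2.2.1 (n + k)).2
    have ihn := ih n
    constructor
    · show e (n + k + 1) * e n = e (n + k + 1)
      conv_lhs => rw [← h1]
      rw [mul_assoc, ihn.1, h1]
    · show e n * e (n + k + 1) = e (n + k + 1)
      conv_lhs => rw [← h2]
      rw [← mul_assoc, ihn.2, h2]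

lemma aux_idem_cases (hchain : IsOmegaChain Q e) {p q : Q}
    (hp : p * p = p) (hq : q * q = q) :
    p * q = q * p ∧ (p * q = p ∨ p * q = q) := by
  obtain ⟨i, rfl⟩ := hchain.2.1 p hp
  obtain ⟨j, rfl⟩ := hchain.2.1 q hq
  rcases le_total i j with h | h
  · obtain ⟨k, rfl⟩ := Nat.exists_eq_add_of_le h
    have t := aux_chain_step hchain k i
    exact ⟨t.2.trans t.1.symm, Or.inr t.2⟩
  · obtain ⟨k, rfl⟩ := Nat.exists_eq_add_of_le h
    have t := aux_chain_step hchain k j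
    exact ⟨t.1.trans t.2.symm, Or.inl t.1⟩

lemma aux_inv_mul (hinv : IsInverseSg Q inv) (hchain : IsOmegaChain Q e) (x y : Q) :
    inv (x * y) = inv y * inv x := by
  have comm : (y * inv y) * (inv x * x) = (inv x * x) * (y * inv y) :=
    (aux_idem_cases hchain (aux_idem_left hinv y) (aux_idem_right hinv x)).1
  symm
  apply aux_inv_unique hinv
  · calc x * y * (inv y * inv x) * (x * y)
        = x * ((y * inv y) * (inv x * x)) * y := by simp only [mul_assoc]
      _ = x * ((inv x * x) * (y * inv y)) * y := by rw [comm]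
      _ = (x * inv x * x) * (y * inv y * y) := by simp only [mul_assoc]
      _ = x * y := by rw [(hinv x).1.1, (hinv y).1.1]
  · calc (inv y * inv x) * (x * y) * (inv y * inv x)
        = inv y * ((inv x * x) * (y * inv y)) * inv x := by simp only [mul_assoc]
      _ = inv y * ((y * inv y) * (inv x * x)) * inv x := by rw [← comm]
      _ = (inv y * y * inv y) * (inv x * x * inv x) := by simp only [mul_assoc]
      _ = inv y * inv x := by rw [(hinv y).1.2, (hinv x).1.2]

end Aux

/-- A left I-order in a bisimple inverse ω-semigroup meets every `𝓛`-class. -/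
theorem stmt0 {Q : Type*} [Semigroup Q] (inv : Q → Q) (e : ℕ → Q)
    (hinv : IsInverseSg Q inv) (hbis : IsBisimple Q) (hchain : IsOmegaChain Q e)
    (S : Subsemigroup Q) (hS : IsLeftIOrder inv (S : Set Q)) :
    ∀ n : ℕ, ∃ s ∈ S, GreenL (s : Q) (e n) := by
  intro n
  obtain ⟨a, ha, b, hb, hE⟩ := hS (e n)
  have hen := hchain.1 n
  have hE' : e n = inv b * a := by
    have h := congrArg inv hE
    rw [aux_inv_of_idem hinv hen, aux_inv_mul hinv hchain, aux_inv_invol hinv] at h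
    exact h
  obtain ⟨comm, hcase⟩ := aux_idem_cases hchain (aux_idem_left hinv a) (aux_idem_left hinv b)
  rcases hcase with h | h
  · -- a * inv a ≤ b * inv b : then e n = inv a * a, take s := a
    have h1 : (inv a * b) * (inv b * a) = e n := by rw [← hE, ← hE']; exact hen
    have key : e n = inv a * a := by
      calc e n = (inv a * b) * (inv b * a) := h1.symm
        _ = (inv a * a * inv a) * b * (inv b * a) := by rw [(hinv a).1.2]
        _ = inv a * ((a * inv a) * (b * inv b)) * a := by simp only [mul_assoc]
        _ = inv a * (a * inv a) * a := by rw [h]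
        _ = inv a * a := by
            simp only [← mul_assoc]; rw [(hinv a).1.2]
    refine ⟨a, ha, Or.inr ⟨inv a, a, key.symm, ?_⟩⟩
    rw [key, ← mul_assoc]; exact (hinv a).1.1
  · -- b * inv b ≤ a * inv a : then e n = inv b * b, take s := b
    have hgf : (b * inv b) * (a * inv a) = b * inv b := comm.symm.trans h
    have h1 : (inv b * a) * (inv a * b) = e n := by rw [← hE', ← hE]; exact hen
    have key : e n = inv b * b := by
      calc e n = (inv b * a) * (inv a * b) := h1.symm
        _ = (inv b * b * inv b) * a * (inv a * b) := by rw [(hinv b).1.2]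
        _ = inv b * ((b * inv b) * (a * inv a)) * b := by simp only [mul_assoc]
        _ = inv b * (b * inv b) * b := by rw [hgf]
        _ = inv b * b := by
            simp only [← mul_assoc]; rw [(hinv b).1.2]
    refine ⟨b, hb, Or.inr ⟨inv b, b, key.symm, ?_⟩⟩
    rw [key, ← mul_assoc]; exact (hinv b).1.1
end

section
/- Let S be a subsemigroup of a bisimple inverse ω-semigroup Q such that S is a left I-order in Q. Then S satisfies: (A) there is a semigroup homomorphism φ: S → 𝓑 such that the image Sφ is a left I-order in 𝓑; and, writing aφ = (r(a), l(a)), (B)(i) for x, y, a ∈ S, if l(x) ≥ r(a), l(y) ≥ r(a) and xa = ya then x = y; (B)(ii) for x, y, a ∈ S, if r(x) ≥ l(a), r(y) ≥ l(a) and ax = ay then x = y; (C) for any b, c ∈ S there exist x, y ∈ S with xb = yc, r(x) = r(y), l(x) = r(b) − l(b) + max(l(b), l(c)) and l(y) = r(c) − l(c) + max(l(b), l(c)). -/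
/-- The bicyclic semigroup `𝓑` carried by `ℕ × ℕ`, an element being `(r, l)`;
`(m,n)(p,q) = (m - n + t, q - p + t)` with `t = max n p`. -/
structure Bicyclic where
  r : ℕ
  l : ℕ

instance : Mul Bicyclic :=
  ⟨fun x y => ⟨x.r + (max x.l y.r - x.l), y.l + (max x.l y.r - y.r)⟩⟩

/-- The inverse `(m,n)⁻¹ = (n,m)` in the bicyclic semigroup. -/
def Bicyclic.inv (x : Bicyclic) : Bicyclic := ⟨x.l, x.r⟩

/-- `T` is a left I-order in the bicyclic semigroup `𝓑`. -/
def IsLeftIOrderBic (T : Set Bicyclic) : Prop :=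
  ∀ q : Bicyclic, ∃ a ∈ T, ∃ b ∈ T, q = a.inv * b

/-- `r a`, the first coordinate of `φ a` in `𝓑`. -/
def rr {S : Type*} [Mul S] (φ : S →ₙ* Bicyclic) (a : S) : ℕ := (φ a).r

/-- `l a`, the second coordinate of `φ a` in `𝓑`. -/
def ll {S : Type*} [Mul S] (φ : S →ₙ* Bicyclic) (a : S) : ℕ := (φ a).l

/-- Condition (A): the image of `φ` is a left I-order in `𝓑`. -/
def CondA {S : Type*} [Mul S] (φ : S →ₙ* Bicyclic) : Prop :=
  IsLeftIOrderBic (Set.range (⇑φ))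

/-- Condition (B)(i): if `l x, l y ≥ r a` and `x * a = y * a` then `x = y`. -/
def CondBi {S : Type*} [Mul S] (φ : S →ₙ* Bicyclic) : Prop :=
  ∀ x y a : S, rr φ a ≤ ll φ x → rr φ a ≤ ll φ y → x * a = y * a → x = y

/-- Condition (B)(ii): if `r x, r y ≥ l a` and `a * x = a * y` then `x = y`. -/
def CondBii {S : Type*} [Mul S] (φ : S →ₙ* Bicyclic) : Prop :=
  ∀ x y a : S, ll φ a ≤ rr φ x → ll φ a ≤ rr φ y → a * x = a * y → x = y

/-- Condition (C): for all `b c` there are `x y` with `x * b = y * c`,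
`r x = r y`, `l x = r b - l b + max (l b) (l c)` and
`l y = r c - l c + max (l b) (l c)`. -/
def CondC {S : Type*} [Mul S] (φ : S →ₙ* Bicyclic) : Prop :=
  ∀ b c : S, ∃ x y : S, x * b = y * c ∧ rr φ x = rr φ y ∧
    ll φ x = rr φ b + (max (ll φ b) (ll φ c) - ll φ b) ∧
    ll φ y = rr φ c + (max (ll φ b) (ll φ c) - ll φ c)

section Aux

variable {Q : Type*} [Semigroup Q] {inv : Q → Q} {e : ℕ → Q}

private lemma sandwich' (p P u v : Q) :
    (p * u * P) * (p * v * P) = p * (u * ((P * p) * v)) * P := by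
  simp only [mul_assoc]

private lemma backconj' (p P u : Q) :
    P * (p * u * P) * p = (P * p) * u * (P * p) := by
  simp only [mul_assoc]

namespace S5

lemma bmul_r (x y : Bicyclic) : (x * y).r = x.r + (max x.l y.r - x.l) := rfl
lemma bmul_l (x y : Bicyclic) : (x * y).l = y.l + (max x.l y.r - y.r) := rfl
lemma binv_r (x : Bicyclic) : x.inv.r = x.l := rfl
lemma binv_l (x : Bicyclic) : x.inv.l = x.r := rfl

lemma bext {x y : Bicyclic} (h1 : x.r = y.r) (h2 : x.l = y.l) : x = y := by
  cases x; cases y; simp_all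

lemma idem_r (hinv : IsInverseSg Q inv) (q : Q) :
    (q * inv q) * (q * inv q) = q * inv q := by
  rw [← mul_assoc, (hinv q).1.1]

lemma idem_l (hinv : IsInverseSg Q inv) (q : Q) :
    (inv q * q) * (inv q * q) = inv q * q := by
  rw [mul_assoc, ← mul_assoc q, (hinv q).1.1]

lemma inv_invo (hinv : IsInverseSg Q inv) (q : Q) : inv (inv q) = q :=
  ((hinv (inv q)).2 q (hinv q).1.2 (hinv q).1.1).symm

lemma ele (hchain : IsOmegaChain Q e) :
    ∀ k m, e (m + k) * e m = e (m + k) ∧ e m * e (m + k) = e (m + k) := by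
  intro k
  induction k with
  | zero => intro m; constructor <;> simpa using hchain.1 m
  | succ k ih =>
    intro m
    have hs := hchain.2.2.1 (m + k)
    constructor
    · calc e (m + k + 1) * e m = (e (m + k + 1) * e (m + k)) * e m := by rw [hs.1]
        _ = e (m + k + 1) * (e (m + k) * e m) := mul_assoc _ _ _
        _ = e (m + k + 1) * e (m + k) := by rw [(ih m).1]
        _ = e (m + k + 1) := hs.1
    · calc e m * e (m + k + 1) = e m * (e (m + k) * e (m + k + 1)) := by rw [hs.2]
        _ = (e m * e (m + k)) * e (m + k + 1) := (mul_assoc _ _ _).symm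
        _ = e (m + k) * e (m + k + 1) := by rw [(ih m).2]
        _ = e (m + k + 1) := hs.2

lemma emul (hchain : IsOmegaChain Q e) (m n : ℕ) : e m * e n = e (max m n) := by
  rcases le_total m n with h | h
  · obtain ⟨k, rfl⟩ := Nat.le.dest h
    rw [(ele hchain k m).2]; congr 1; omega
  · obtain ⟨k, rfl⟩ := Nat.le.dest h
    rw [(ele hchain k n).1]; congr 1; omega

lemma idem_comm (hchain : IsOmegaChain Q e) {p q : Q}
    (hp : p * p = p) (hq : q * q = q) : p * q = q * p := by
  obtain ⟨i, rfl⟩ := hchain.2.1 p hp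
  obtain ⟨j, rfl⟩ := hchain.2.1 q hq
  rw [emul hchain, emul hchain, Nat.max_comm]

lemma inv_mul_rev (hinv : IsInverseSg Q inv) (hchain : IsOmegaChain Q e) (a b : Q) :
    inv (a * b) = inv b * inv a := by
  have hcomm : (b * inv b) * (inv a * a) = (inv a * a) * (b * inv b) :=
    idem_comm hchain (idem_r hinv b) (idem_l hinv a)
  have h1 : (a * b) * (inv b * inv a) * (a * b) = a * b := by
    calc (a * b) * (inv b * inv a) * (a * b)
        = a * ((b * inv b) * (inv a * a)) * b := by simp only [mul_assoc]
      _ = a * ((inv a * a) * (b * inv b)) * b := by rw [hcomm]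
      _ = (a * inv a * a) * (b * inv b * b) := by simp only [mul_assoc]
      _ = a * b := by rw [(hinv a).1.1, (hinv b).1.1]
  have h2 : (inv b * inv a) * (a * b) * (inv b * inv a) = inv b * inv a := by
    calc (inv b * inv a) * (a * b) * (inv b * inv a)
        = inv b * ((inv a * a) * (b * inv b)) * inv a := by simp only [mul_assoc]
      _ = inv b * ((b * inv b) * (inv a * a)) * inv a := by rw [hcomm]
      _ = (inv b * b * inv b) * (inv a * a * inv a) := by simp only [mul_assoc]
      _ = inv b * inv a := by rw [(hinv b).1.2, (hinv a).1.2]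
  exact ((hinv (a * b)).2 _ h1 h2).symm

lemma inv_e (hinv : IsInverseSg Q inv) (hchain : IsOmegaChain Q e) (n : ℕ) :
    inv (e n) = e n := by
  have h : e n * e n * e n = e n := by rw [hchain.1 n, hchain.1 n]
  exact ((hinv (e n)).2 (e n) h h).symm

noncomputable def Mi (hinv : IsInverseSg Q inv) (hchain : IsOmegaChain Q e) (q : Q) : ℕ :=
  (hchain.2.1 (q * inv q) (idem_r hinv q)).choose

lemma Mi_spec (hinv : IsInverseSg Q inv) (hchain : IsOmegaChain Q e) (q : Q) :
    q * inv q = e (Mi hinv hchain q) :=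
  (hchain.2.1 (q * inv q) (idem_r hinv q)).choose_spec

noncomputable def Ni (hinv : IsInverseSg Q inv) (hchain : IsOmegaChain Q e) (q : Q) : ℕ :=
  (hchain.2.1 (inv q * q) (idem_l hinv q)).choose

lemma Ni_spec (hinv : IsInverseSg Q inv) (hchain : IsOmegaChain Q e) (q : Q) :
    inv q * q = e (Ni hinv hchain q) :=
  (hchain.2.1 (inv q * q) (idem_l hinv q)).choose_spec

variable (hinv : IsInverseSg Q inv) (hchain : IsOmegaChain Q e)

lemma Mi_inv (q : Q) : Mi hinv hchain (inv q) = Ni hinv hchain q := by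
  apply hchain.2.2.2
  rw [← Mi_spec hinv hchain (inv q), inv_invo hinv, Ni_spec hinv hchain]

lemma Ni_inv (q : Q) : Ni hinv hchain (inv q) = Mi hinv hchain q := by
  apply hchain.2.2.2
  rw [← Ni_spec hinv hchain (inv q), inv_invo hinv, Mi_spec hinv hchain]

lemma mul_e_N (q : Q) : q * e (Ni hinv hchain q) = q := by
  rw [← Ni_spec hinv hchain q, ← mul_assoc, (hinv q).1.1]

lemma e_M_mul (q : Q) : e (Mi hinv hchain q) * q = q := by
  rw [← Mi_spec hinv hchain q]; exact (hinv q).1.1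

lemma mul_e_merge (q : Q) (k : ℕ) :
    q * e k = q * e (max (Ni hinv hchain q) k) := by
  conv_lhs => rw [← mul_e_N hinv hchain q]
  rw [mul_assoc, emul hchain]

lemma e_mul_merge (q : Q) (k : ℕ) :
    e k * q = e (max k (Mi hinv hchain q)) * q := by
  conv_lhs => rw [← e_M_mul hinv hchain q]
  rw [← mul_assoc, emul hchain]

lemma absorb_r (q : Q) {k : ℕ} (h : k ≤ Ni hinv hchain q) : q * e k = q := by
  rw [mul_e_merge hinv hchain q k]
  have : max (Ni hinv hchain q) k = Ni hinv hchain q := by omega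
  rw [this, mul_e_N hinv hchain]

lemma absorb_l (q : Q) {k : ℕ} (h : k ≤ Mi hinv hchain q) : e k * q = q := by
  rw [e_mul_merge hinv hchain q k]
  have : max k (Mi hinv hchain q) = Mi hinv hchain q := by omega
  rw [this, e_M_mul hinv hchain]

lemma conj (a : Q) :
    ∀ k, a * e (Ni hinv hchain a + k) * inv a = e (Mi hinv hchain a + k) := by
  have einj := hchain.2.2.2
  set m := Mi hinv hchain a with hm
  set n := Ni hinv hchain a with hn
  have specM : a * inv a = e m := by rw [hm]; exact Mi_spec hinv hchain a
  have specN : inv a * a = e n := by rw [hn]; exact Ni_spec hinv hchain a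
  intro k
  induction k with
  | zero =>
    show a * e n * inv a = e m
    rw [← specN, ← mul_assoc a (inv a) a, (hinv a).1.1, specM]
  | succ k ih =>
    show a * e (n + k + 1) * inv a = e (m + k + 1)
    have hidem : (a * e (n + k + 1) * inv a) * (a * e (n + k + 1) * inv a)
        = a * e (n + k + 1) * inv a := by
      rw [sandwich', specN, emul hchain, emul hchain]
      have : max (n + k + 1) (max n (n + k + 1)) = n + k + 1 := by omega
      rw [this]
    obtain ⟨i, hi⟩ := hchain.2.1 _ hidem
    have hback : inv a * e i * a = e (n + k + 1) := by
      rw [← hi, backconj', specN, emul hchain, emul hchain]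
      congr 1; omega
    have hbackIH : inv a * e (m + k) * a = e (n + k) := by
      rw [← ih, backconj', specN, emul hchain, emul hchain]
      congr 1; omega
    have hige : max i (m + k) = i := by
      apply einj
      rw [← emul hchain, ← hi, ← ih, sandwich', specN, emul hchain, emul hchain]
      have : max (n + k + 1) (max n (n + k)) = n + k + 1 := by omega
      rw [this]
    have hne : i ≠ m + k := by
      intro h
      rw [h] at hback
      rw [hbackIH] at hback
      have := einj hback
      omega
    have hidem2 : (inv a * e (m + k + 1) * a) * (inv a * e (m + k + 1) * a)
        = inv a * e (m + k + 1) * a := by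
      rw [sandwich', specM, emul hchain, emul hchain]
      have : max (m + k + 1) (max m (m + k + 1)) = m + k + 1 := by omega
      rw [this]
    obtain ⟨j, hj⟩ := hchain.2.1 _ hidem2
    have hbackj : a * e j * inv a = e (m + k + 1) := by
      rw [← hj, backconj', specM, emul hchain, emul hchain]
      congr 1; omega
    have hjge : max j (n + k) = j := by
      apply einj
      rw [← emul hchain, ← hj, ← hbackIH, sandwich', specM, emul hchain, emul hchain]
      have : max (m + k + 1) (max m (m + k)) = m + k + 1 := by omega
      rw [this]
    have hjne : j ≠ n + k := by
      intro h
      rw [h] at hbackj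
      rw [ih] at hbackj
      have := einj hbackj
      omega
    have hile : max i (m + k + 1) = m + k + 1 := by
      apply einj
      rw [← emul hchain, ← hi, ← hbackj, sandwich', specN, emul hchain, emul hchain]
      have : max (n + k + 1) (max n j) = j := by omega
      rw [this]
    have : i = m + k + 1 := by omega
    rw [hi, this]

noncomputable def phiQ (q : Q) : Bicyclic :=
  ⟨Mi hinv hchain q, Ni hinv hchain q⟩

lemma phiQ_r (q : Q) : (phiQ hinv hchain q).r = Mi hinv hchain q := rfl
lemma phiQ_l (q : Q) : (phiQ hinv hchain q).l = Ni hinv hchain q := rfl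

lemma Mi_mul (p q : Q) :
    Mi hinv hchain (p * q) =
      Mi hinv hchain p + (max (Ni hinv hchain p) (Mi hinv hchain q) - Ni hinv hchain p) := by
  apply hchain.2.2.2
  rw [← Mi_spec hinv hchain (p * q), inv_mul_rev hinv hchain]
  calc p * q * (inv q * inv p) = p * (q * inv q) * inv p := by simp only [mul_assoc]
    _ = p * e (Mi hinv hchain q) * inv p := by rw [Mi_spec hinv hchain q]
    _ = p * e (max (Ni hinv hchain p) (Mi hinv hchain q)) * inv p := by
        rw [mul_e_merge hinv hchain p]
    _ = p * e (Ni hinv hchain p + (max (Ni hinv hchain p) (Mi hinv hchain q) - Ni hinv hchain p))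
          * inv p := by
        have : max (Ni hinv hchain p) (Mi hinv hchain q)
            = Ni hinv hchain p + (max (Ni hinv hchain p) (Mi hinv hchain q) - Ni hinv hchain p) := by
          omega
        rw [← this]
    _ = e (Mi hinv hchain p + (max (Ni hinv hchain p) (Mi hinv hchain q) - Ni hinv hchain p)) :=
        conj hinv hchain p _

lemma Ni_mul (p q : Q) :
    Ni hinv hchain (p * q) =
      Ni hinv hchain q + (max (Ni hinv hchain p) (Mi hinv hchain q) - Mi hinv hchain q) := by
  apply hchain.2.2.2
  rw [← Ni_spec hinv hchain (p * q), inv_mul_rev hinv hchain]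
  have hc := conj hinv hchain (inv q) (max (Mi hinv hchain q) (Ni hinv hchain p) - Mi hinv hchain q)
  rw [inv_invo hinv, Ni_inv hinv hchain, Mi_inv hinv hchain] at hc
  calc inv q * inv p * (p * q) = inv q * (inv p * p) * q := by simp only [mul_assoc]
    _ = inv q * e (Ni hinv hchain p) * q := by rw [Ni_spec hinv hchain p]
    _ = inv q * e (max (Ni hinv hchain (inv q)) (Ni hinv hchain p)) * q := by
        rw [mul_e_merge hinv hchain (inv q)]
    _ = inv q * e (Mi hinv hchain q
          + (max (Mi hinv hchain q) (Ni hinv hchain p) - Mi hinv hchain q)) * q := by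
        rw [Ni_inv hinv hchain]
        have : max (Mi hinv hchain q) (Ni hinv hchain p)
            = Mi hinv hchain q + (max (Mi hinv hchain q) (Ni hinv hchain p) - Mi hinv hchain q) := by
          omega
        rw [← this]
    _ = e (Ni hinv hchain q + (max (Mi hinv hchain q) (Ni hinv hchain p) - Mi hinv hchain q)) := hc
    _ = e (Ni hinv hchain q + (max (Ni hinv hchain p) (Mi hinv hchain q) - Mi hinv hchain q)) := by
        congr 1; omega

lemma phiQ_mul (p q : Q) :
    phiQ hinv hchain (p * q) = phiQ hinv hchain p * phiQ hinv hchain q := by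
  apply bext
  · rw [phiQ_r, bmul_r, phiQ_r, phiQ_l, phiQ_r, Mi_mul hinv hchain]
  · rw [phiQ_l, bmul_l, phiQ_l, phiQ_l, phiQ_r, Ni_mul hinv hchain]

lemma phiQ_inv (q : Q) : phiQ hinv hchain (inv q) = (phiQ hinv hchain q).inv := by
  apply bext
  · rw [phiQ_r, binv_r, phiQ_l, Mi_inv hinv hchain]
  · rw [phiQ_l, binv_l, phiQ_r, Ni_inv hinv hchain]

lemma Mi_e (n : ℕ) : Mi hinv hchain (e n) = n := by
  apply hchain.2.2.2
  rw [← Mi_spec hinv hchain (e n), inv_e hinv hchain, hchain.1 n]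

lemma Ni_e (n : ℕ) : Ni hinv hchain (e n) = n := by
  apply hchain.2.2.2
  rw [← Ni_spec hinv hchain (e n), inv_e hinv hchain, hchain.1 n]

lemma Mi_le_mul (a x : Q) : Mi hinv hchain a ≤ Mi hinv hchain (a * x) := by
  have key : (a * x) * inv (a * x) * (a * inv a) = (a * x) * inv (a * x) := by
    rw [inv_mul_rev hinv hchain]
    calc a * x * (inv x * inv a) * (a * inv a)
        = a * ((x * inv x) * (inv a * a)) * inv a := by simp only [mul_assoc]
      _ = a * ((inv a * a) * (x * inv x)) * inv a := by
          rw [idem_comm hchain (idem_r hinv x) (idem_l hinv a)]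
      _ = (a * inv a * a) * (x * inv x * inv a) := by simp only [mul_assoc]
      _ = a * (x * inv x * inv a) := by rw [(hinv a).1.1]
      _ = a * x * (inv x * inv a) := by simp only [mul_assoc]
  rw [Mi_spec hinv hchain (a * x), Mi_spec hinv hchain a, emul hchain] at key
  have := hchain.2.2.2 key
  omega

lemma Ni_le_mul (a x : Q) : Ni hinv hchain a ≤ Ni hinv hchain (x * a) := by
  have key : inv (x * a) * (x * a) * (inv a * a) = inv (x * a) * (x * a) := by
    rw [inv_mul_rev hinv hchain]
    calc inv a * inv x * (x * a) * (inv a * a)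
        = inv a * (inv x * x) * (a * inv a * a) := by simp only [mul_assoc]
      _ = inv a * (inv x * x) * a := by rw [(hinv a).1.1]
      _ = inv a * inv x * (x * a) := by simp only [mul_assoc]
  rw [Ni_spec hinv hchain (x * a), Ni_spec hinv hchain a, emul hchain] at key
  have := hchain.2.2.2 key
  omega

lemma greenR_Mi {a b : Q} (h : GreenR a b) : Mi hinv hchain a = Mi hinv hchain b := by
  rcases h with rfl | ⟨x, y, hx, hy⟩
  · rfl
  · have h1 := Mi_le_mul hinv hchain a x
    have h2 := Mi_le_mul hinv hchain b y
    rw [hx] at h1; rw [hy] at h2; omega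

lemma greenL_Ni {a b : Q} (h : GreenL a b) : Ni hinv hchain a = Ni hinv hchain b := by
  rcases h with rfl | ⟨x, y, hx, hy⟩
  · rfl
  · have h1 := Ni_le_mul hinv hchain a x
    have h2 := Ni_le_mul hinv hchain b y
    rw [hx] at h1; rw [hy] at h2; omega

lemma exists_MN (hbis : IsBisimple Q) (m n : ℕ) :
    ∃ q : Q, Mi hinv hchain q = m ∧ Ni hinv hchain q = n := by
  obtain ⟨c, hR, hL⟩ := hbis (e m) (e n)
  refine ⟨c, ?_, ?_⟩
  · rw [← greenR_Mi hinv hchain hR, Mi_e hinv hchain]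
  · rw [greenL_Ni hinv hchain hL, Ni_e hinv hchain]

lemma exists_mem_N {T : Set Q} (hT : IsLeftIOrder inv T) (k : ℕ) :
    ∃ s, s ∈ T ∧ Ni hinv hchain s = k := by
  obtain ⟨u, hu, v, hv, heq⟩ := hT (e k)
  have hph := congrArg (phiQ hinv hchain) heq
  rw [phiQ_mul hinv hchain, phiQ_inv hinv hchain] at hph
  have hr := congrArg Bicyclic.r hph
  have hl := congrArg Bicyclic.l hph
  simp only [bmul_r, bmul_l, binv_r, binv_l, phiQ_r, phiQ_l,
    Mi_e hinv hchain, Ni_e hinv hchain] at hr hl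
  rcases le_total (Mi hinv hchain v) (Mi hinv hchain u) with h | h
  · exact ⟨u, hu, by omega⟩
  · exact ⟨v, hv, by omega⟩

end S5

end Aux


open S5

/-- A left I-order `S` in a bisimple inverse ω-semigroup satisfies conditions
(A), (B)(i), (B)(ii), (C). -/
theorem stmt5 {Q : Type*} [Semigroup Q] (inv : Q → Q) (e : ℕ → Q)
    (hinv : IsInverseSg Q inv) (hbis : IsBisimple Q) (hchain : IsOmegaChain Q e)
    (S : Subsemigroup Q) (hS : IsLeftIOrder inv (S : Set Q)) :
    ∃ φ : S →ₙ* Bicyclic, CondA φ ∧ CondBi φ ∧ CondBii φ ∧ CondC φ := by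
  classical
  refine ⟨⟨fun s => phiQ hinv hchain (s : Q), fun s t => phiQ_mul hinv hchain (s : Q) (t : Q)⟩,
    ?_, ?_, ?_, ?_⟩
  · -- Condition (A)
    intro q
    obtain ⟨w, hwM, hwN⟩ := exists_MN hinv hchain hbis q.r q.l
    obtain ⟨A, hA, B, hB, heq⟩ := hS w
    refine ⟨_, ⟨(⟨A, hA⟩ : S), rfl⟩, _, ⟨(⟨B, hB⟩ : S), rfl⟩, ?_⟩
    have hq : phiQ hinv hchain w = q := bext hwM hwN
    show q = (phiQ hinv hchain A).inv * phiQ hinv hchain B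
    rw [← hq, heq, phiQ_mul hinv hchain, phiQ_inv hinv hchain]
  · -- Condition (B)(i)
    intro x y a h1 h2 h3
    have h1' : Mi hinv hchain (a : Q) ≤ Ni hinv hchain (x : Q) := h1
    have h2' : Mi hinv hchain (a : Q) ≤ Ni hinv hchain (y : Q) := h2
    have h3' : (x : Q) * a = (y : Q) * a := congrArg Subtype.val h3
    apply Subtype.ext
    calc (x : Q) = (x : Q) * e (Mi hinv hchain (a : Q)) :=
          (absorb_r hinv hchain _ h1').symm
      _ = (x : Q) * ((a : Q) * inv (a : Q)) := by rw [Mi_spec hinv hchain]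
      _ = ((x : Q) * (a : Q)) * inv (a : Q) := by rw [mul_assoc]
      _ = ((y : Q) * (a : Q)) * inv (a : Q) := by rw [h3']
      _ = (y : Q) * ((a : Q) * inv (a : Q)) := by rw [mul_assoc]
      _ = (y : Q) * e (Mi hinv hchain (a : Q)) := by rw [Mi_spec hinv hchain]
      _ = (y : Q) := absorb_r hinv hchain _ h2'
  · -- Condition (B)(ii)
    intro x y a h1 h2 h3
    have h1' : Ni hinv hchain (a : Q) ≤ Mi hinv hchain (x : Q) := h1
    have h2' : Ni hinv hchain (a : Q) ≤ Mi hinv hchain (y : Q) := h2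
    have h3' : (a : Q) * x = (a : Q) * y := congrArg Subtype.val h3
    apply Subtype.ext
    calc (x : Q) = e (Ni hinv hchain (a : Q)) * (x : Q) :=
          (absorb_l hinv hchain _ h1').symm
      _ = (inv (a : Q) * (a : Q)) * (x : Q) := by rw [Ni_spec hinv hchain]
      _ = inv (a : Q) * ((a : Q) * (x : Q)) := by rw [mul_assoc]
      _ = inv (a : Q) * ((a : Q) * (y : Q)) := by rw [h3']
      _ = (inv (a : Q) * (a : Q)) * (y : Q) := by rw [mul_assoc]
      _ = e (Ni hinv hchain (a : Q)) * (y : Q) := by rw [Ni_spec hinv hchain]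
      _ = (y : Q) := absorb_l hinv hchain _ h2'
  · -- Condition (C)
    intro b c
    obtain ⟨xv, hx, yv, hy, hzeq⟩ := hS ((b : Q) * inv (c : Q))
    have hph := congrArg (phiQ hinv hchain) hzeq
    rw [phiQ_mul hinv hchain, phiQ_mul hinv hchain, phiQ_inv hinv hchain,
      phiQ_inv hinv hchain] at hph
    have hr := congrArg Bicyclic.r hph
    have hl := congrArg Bicyclic.l hph
    simp only [bmul_r, bmul_l, binv_r, binv_l, phiQ_r, phiQ_l] at hr hl
    set M := max (Mi hinv hchain xv) (Mi hinv hchain yv) with hM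
    obtain ⟨s, hsmem, hsN⟩ := exists_mem_N hinv hchain hS M
    have hsM : s * e M = s := by rw [← hsN]; exact mul_e_N hinv hchain s
    -- the key equation
    have s1 : xv * ((b : Q) * inv (c : Q)) = e (Mi hinv hchain xv) * yv := by
      rw [hzeq, ← mul_assoc, Mi_spec hinv hchain]
    have s2 : e M * (xv * ((b : Q) * inv (c : Q))) = e M * yv := by
      rw [s1, ← mul_assoc, emul hchain]
      have : max M (Mi hinv hchain xv) = M := by omega
      rw [this]
    have s3 : e M * (xv * ((b : Q) * inv (c : Q))) * (c : Q) = (e M * yv) * (c : Q) := by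
      rw [s2]
    have s4 : e M * (xv * ((b : Q) * inv (c : Q))) * (c : Q)
        = (e M * (xv * (b : Q))) * e (Ni hinv hchain (c : Q)) := by
      rw [← Ni_spec hinv hchain]
      simp only [mul_assoc]
    have s5 : Ni hinv hchain (e M * (xv * (b : Q)))
        = Ni hinv hchain (b : Q)
          + (max (Ni hinv hchain (b : Q)) (Ni hinv hchain (c : Q)) - Ni hinv hchain (b : Q)) := by
      rw [Ni_mul hinv hchain, Ni_mul hinv hchain, Mi_mul hinv hchain,
        Ni_e hinv hchain]
      omega
    have s6 : (e M * (xv * (b : Q))) * e (Ni hinv hchain (c : Q)) = e M * (xv * (b : Q)) := by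
      apply absorb_r hinv hchain
      rw [s5]; omega
    have key : e M * (xv * (b : Q)) = e M * (yv * (c : Q)) := by
      rw [s4] at s3
      rw [s6] at s3
      rw [s3, mul_assoc]
    refine ⟨(⟨s, hsmem⟩ : S) * ⟨xv, hx⟩, (⟨s, hsmem⟩ : S) * ⟨yv, hy⟩, ?_, ?_, ?_, ?_⟩
    · apply Subtype.ext
      show s * xv * (b : Q) = s * yv * (c : Q)
      calc s * xv * (b : Q) = (s * e M) * (xv * (b : Q)) := by rw [hsM, mul_assoc]
        _ = s * (e M * (xv * (b : Q))) := by rw [mul_assoc]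
        _ = s * (e M * (yv * (c : Q))) := by rw [key]
        _ = (s * e M) * (yv * (c : Q)) := by rw [← mul_assoc]
        _ = s * yv * (c : Q) := by rw [hsM, ← mul_assoc]
    · show Mi hinv hchain (s * xv) = Mi hinv hchain (s * yv)
      rw [Mi_mul hinv hchain, Mi_mul hinv hchain, hsN]
      omega
    · show Ni hinv hchain (s * xv)
        = Mi hinv hchain (b : Q)
          + (max (Ni hinv hchain (b : Q)) (Ni hinv hchain (c : Q)) - Ni hinv hchain (b : Q))
      rw [Ni_mul hinv hchain, hsN]
      omega
    · show Ni hinv hchain (s * yv)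
        = Mi hinv hchain (c : Q)
          + (max (Ni hinv hchain (b : Q)) (Ni hinv hchain (c : Q)) - Ni hinv hchain (c : Q))
      rw [Ni_mul hinv hchain, hsN]
      omega
end

section
/- Let S be a semigroup satisfying conditions (A), (B), (C). Then the relation ~ on Σ = {(a,b) ∈ S × S : r(a) = r(b)}, defined by (a,b) ~ (c,d) iff there exist x, y ∈ S with xa = yc, xb = yd, l(x) = r(a), l(y) = r(c) and r(x) = r(y), is an equivalence relation on Σ. -/
/-- `Σ = {(a,b) ∈ S × S : r a = r b}`. -/
abbrev Sig {S : Type*} [Mul S] (φ : S →ₙ* Bicyclic) : Type _ :=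
  {p : S × S // rr φ p.1 = rr φ p.2}

/-- The relation `∼` on pairs: `(a,b) ∼ (c,d)` iff there are `x y` with
`x * a = y * c`, `x * b = y * d`, `l x = r a`, `l y = r c`, `r x = r y`. -/
def simP {S : Type*} [Mul S] (φ : S →ₙ* Bicyclic) (p q : S × S) : Prop :=
  ∃ x y : S, x * p.1 = y * q.1 ∧ x * p.2 = y * q.2 ∧
    ll φ x = rr φ p.1 ∧ ll φ y = rr φ q.1 ∧ rr φ x = rr φ y

/-- The relation `∼` on `Σ`. -/
def sim {S : Type*} [Mul S] (φ : S →ₙ* Bicyclic) (p q : Sig φ) : Prop :=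
  simP φ p.1 q.1

lemma rr_mul {S : Type*} [Mul S] (φ : S →ₙ* Bicyclic) (a b : S) :
    rr φ (a * b) = rr φ a + (max (ll φ a) (rr φ b) - ll φ a) := by
  unfold rr ll; rw [map_mul]; rfl

lemma ll_mul {S : Type*} [Mul S] (φ : S →ₙ* Bicyclic) (a b : S) :
    ll φ (a * b) = ll φ b + (max (ll φ a) (rr φ b) - rr φ b) := by
  unfold rr ll; rw [map_mul]; rfl

/-- The relation `∼` is an equivalence on `Σ`. -/
theorem stmt7 {S : Type*} [Semigroup S] (φ : S →ₙ* Bicyclic)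
    (hA : CondA φ) (hBi : CondBi φ) (hBii : CondBii φ) (hC : CondC φ) :
    Equivalence (sim φ) := by
  constructor
  · rintro ⟨⟨a, b⟩, hp⟩
    obtain ⟨x, y, hxy, hr, hlx, hly⟩ := hC a a
    rw [max_self, Nat.sub_self, add_zero] at hlx hly
    have hxe : x = y := hBi x y a (by omega) (by omega) hxy
    subst hxe
    exact ⟨x, x, rfl, rfl, hlx, hlx, rfl⟩
  · rintro ⟨⟨a, b⟩, _⟩ ⟨⟨c, d⟩, _⟩ ⟨x, y, h1, h2, h3, h4, h5⟩
    exact ⟨y, x, h1.symm, h2.symm, h4, h3, h5.symm⟩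
  · rintro ⟨⟨a, b⟩, _⟩ ⟨⟨c, d⟩, _⟩ ⟨⟨e, f⟩, _⟩
      ⟨x, y, hxa, hxb, hlx, hly, hrxy⟩ ⟨u, v, huc, hud, hlu, hlv, hruv⟩
    obtain ⟨s, t, hst, hrst, hls, hlt⟩ := hC y u
    have hyu : ll φ y = ll φ u := hly.trans hlu.symm
    rw [hyu, max_self, Nat.sub_self, add_zero] at hls hlt
    refine ⟨s * x, t * v, ?_, ?_, ?_, ?_, ?_⟩
    · rw [mul_assoc, hxa, ← mul_assoc, hst, mul_assoc, huc, ← mul_assoc]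
    · rw [mul_assoc, hxb, ← mul_assoc, hst, mul_assoc, hud, ← mul_assoc]
    · rw [ll_mul]; simp only at *; omega
    · rw [ll_mul]; simp only at *; omega
    · rw [rr_mul, rr_mul]; simp only at *; omega
end

section
/- Let S be a semigroup satisfying conditions (A), (B), (C), and let a, b, c, d, e ∈ S. If abc = dec, l(b) ≥ r(c) and l(e) ≥ r(c), then ab = de. -/
/-- If `a*b*c = d*e*c`, `l b ≥ r c` and `l e ≥ r c`, then `a*b = d*e`. -/
theorem stmt10 {S : Type*} [Semigroup S] (φ : S →ₙ* Bicyclic)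
    (hA : CondA φ) (hBi : CondBi φ) (hBii : CondBii φ) (hC : CondC φ)
    (a b c d e : S) (h : a * b * c = d * e * c)
    (hb : rr φ c ≤ ll φ b) (he : rr φ c ≤ ll φ e) :
    a * b = d * e := by
  have key : ∀ x y : S, ll φ y ≤ ll φ (x * y) := by
    intro x y
    show ll φ y ≤ (φ (x * y)).l
    rw [map_mul]
    exact Nat.le_add_right _ _
  exact hBi (a * b) (d * e) c (le_trans hb (key a b)) (le_trans he (key d e)) h
end
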